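/- Let R be a term rewrite system such that |MSDC(r)| = 1 for every rule ℓ → r ∈ R, and let t0 be a basic term for R. Then in every rewrite sequence t0 ⇉ t1 ⇉ t2 ⇉ …, each term ti contains at most one innermost redex. -/

import Mathlib

namespace ParallelComplexity

/-! ## First-order terms -/

inductive Term (σ : Type) (V : Type) : Type where
  | var : V → Term σ V
  | fn : σ → List (Term σ V) → Term σ V

variable {σ V : Type}

mutual
  /-- Application of a substitution to a term. -/
  def Term.subst (θ : V → Term σ V) : Term σ V → Term σ V
    | Term.var x => θ x
    | Term.fn f ts => Term.fn f (Term.substList θ ts)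
  def Term.substList (θ : V → Term σ V) : List (Term σ V) → List (Term σ V)
    | [] => []
    | t :: ts => Term.subst θ t :: Term.substList θ ts
end

mutual
  /-- The size |t| of a term. -/
  def Term.size : Term σ V → ℕ
    | Term.var _ => 1
    | Term.fn _ ts => 1 + Term.sizeList ts
  def Term.sizeList : List (Term σ V) → ℕ
    | [] => 0
    | t :: ts => Term.size t + Term.sizeList ts
end

/-- Subterm `t|π` at a position (positions are lists of argument indices);
`none` if the position is not a position of `t`. -/
def Term.subtermAt : Term σ V → List ℕ → Option (Term σ V)
  | t, [] => some t
  | Term.var _, _ :: _ => none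
  | Term.fn _ ts, i :: π =>
    match ts[i]? with
    | none => none
    | some u => Term.subtermAt u π

/-- `t[s]π`: replacement of the subterm at position `π` by `s`. -/
def Term.replaceAt : Term σ V → List ℕ → Term σ V → Option (Term σ V)
  | _, [], s => some s
  | Term.var _, _ :: _, _ => none
  | Term.fn f ts, i :: π, s =>
    match ts[i]? with
    | none => none
    | some u =>
      match Term.replaceAt u π s with
      | none => none
      | some u' => some (Term.fn f (ts.set i u'))

def Term.isVar (t : Term σ V) : Prop := ∃ x, t = Term.var x

/-- `x` occurs as a variable in the term. -/
inductive Term.VarIn (x : V) : Term σ V → Prop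
  | var : Term.VarIn x (Term.var x)
  | fn {f : σ} {ts : List (Term σ V)} {t : Term σ V} :
      t ∈ ts → Term.VarIn x t → Term.VarIn x (Term.fn f ts)

/-! ## Term rewrite systems -/

structure Rule (σ V : Type) where
  lhs : Term σ V
  rhs : Term σ V

/-- A well-formed TRS: a finite set of rules `ℓ → r` with `ℓ ∉ V` and
`Var(r) ⊆ Var(ℓ)`. -/
def IsWfTRS (R : Set (Rule σ V)) : Prop :=
  R.Finite ∧ (∀ r ∈ R, ¬ r.lhs.isVar) ∧
    ∀ r ∈ R, ∀ x : V, Term.VarIn x r.rhs → Term.VarIn x r.lhs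

def IsRedex (R : Set (Rule σ V)) (t : Term σ V) : Prop :=
  ∃ r ∈ R, ∃ θ : V → Term σ V, t = Term.subst θ r.lhs

/-- An innermost redex: a redex none of whose proper subterms is a redex. -/
def IsInnermostRedex (R : Set (Rule σ V)) (t : Term σ V) : Prop :=
  IsRedex R t ∧
    ∀ π : List ℕ, π ≠ [] → ∀ u, t.subtermAt π = some u → ¬ IsRedex R u

/-- One rewrite step at position `π`. -/
def RewriteAt (R : Set (Rule σ V)) (π : List ℕ) (s t : Term σ V) : Prop :=
  ∃ r ∈ R, ∃ θ : V → Term σ V,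
    s.subtermAt π = some (Term.subst θ r.lhs) ∧
    s.replaceAt π (Term.subst θ r.rhs) = some t

/-- The rewrite relation `s →_R t`. -/
def Rewrite (R : Set (Rule σ V)) (s t : Term σ V) : Prop := ∃ π, RewriteAt R π s t

/-- The innermost rewrite relation `s →i t`. -/
def InnermostRewrite (R : Set (Rule σ V)) (s t : Term σ V) : Prop :=
  ∃ π, ∃ r ∈ R, ∃ θ : V → Term σ V,
    s.subtermAt π = some (Term.subst θ r.lhs) ∧
    IsInnermostRedex R (Term.subst θ r.lhs) ∧
    s.replaceAt π (Term.subst θ r.rhs) = some t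

def NormalForm (R : Set (Rule σ V)) (t : Term σ V) : Prop := ¬ ∃ u, Rewrite R t u

/-- Parallel-innermost rewriting `s ⇉ t`: `s →i⁺ t` and either
(a) `s` is an innermost redex and `s →i t`, or (b) `s = f(s₁,…,sₙ)`,
`t = f(t₁,…,tₙ)` and each `sₖ ⇉ tₖ` or `sₖ = tₖ` is a normal form. -/
inductive ParInnermost (R : Set (Rule σ V)) : Term σ V → Term σ V → Prop
  | redex {s t : Term σ V} :
      Relation.TransGen (InnermostRewrite R) s t →
      IsInnermostRedex R s → InnermostRewrite R s t → ParInnermost R s t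
  | congr (f : σ) (ss ts : List (Term σ V)) :
      Relation.TransGen (InnermostRewrite R) (Term.fn f ss) (Term.fn f ts) →
      ss.length = ts.length →
      -- each `sₖ ⇉ tₖ`, or `sₖ = tₖ` is a normal form (stated as the
      -- classically equivalent implication to satisfy the kernel's
      -- restrictions on nested inductive occurrences)
      (∀ p ∈ ss.zip ts, ¬ (p.1 = p.2 ∧ NormalForm R p.1) → ParInnermost R p.1 p.2) →
      ParInnermost R (Term.fn f ss) (Term.fn f ts)

/-! ## Abstract properties of relations -/

def Confluent {α : Type} (r : α → α → Prop) : Prop :=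
  ∀ s t u, Relation.ReflTransGen r s t → Relation.ReflTransGen r s u →
    ∃ v, Relation.ReflTransGen r t v ∧ Relation.ReflTransGen r u v

def Deterministic {α : Type} (r : α → α → Prop) : Prop :=
  ∀ s t u, r s t → r s u → t = u

def UniformlyConfluent {α : Type} (r : α → α → Prop) : Prop :=
  ∀ s t u, r s t → r s u → t = u ∨ ∃ v, r t v ∧ r u v

/-! ## Derivation height and runtime complexity -/

/-- `e`-th iterate of a relation. -/
def iterRel {α : Type} (r : α → α → Prop) : ℕ → α → α → Prop
  | 0 => fun a b => a = b
  | n + 1 => fun a c => ∃ b, r a b ∧ iterRel r n b c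

/-- Derivation height `Dh(t, →) = sup { e | ∃ t'. t →^e t' } ∈ ℕ ∪ {ω}`. -/
noncomputable def Dh {α : Type} (r : α → α → Prop) (t : α) : ℕ∞ :=
  sSup { e : ℕ∞ | ∃ n : ℕ, e = (n : ℕ∞) ∧ ∃ t', iterRel r n t t' }

/-- Defined symbols: root symbols of left-hand sides. -/
def Defined (R : Set (Rule σ V)) (f : σ) : Prop :=
  ∃ r ∈ R, ∃ ts : List (Term σ V), r.lhs = Term.fn f ts

def HasDefinedRoot (R : Set (Rule σ V)) (t : Term σ V) : Prop :=
  ∃ f ts, t = Term.fn f ts ∧ Defined R f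

/-- Constructor terms: terms over constructor symbols and variables. -/
inductive ConsTerm (R : Set (Rule σ V)) : Term σ V → Prop
  | var (x : V) : ConsTerm R (Term.var x)
  | fn (f : σ) (ts : List (Term σ V)) :
      ¬ Defined R f → (∀ t ∈ ts, ConsTerm R t) → ConsTerm R (Term.fn f ts)

/-- Basic terms: a defined symbol applied to constructor terms. -/
def BasicTerm (R : Set (Rule σ V)) (t : Term σ V) : Prop :=
  ∃ f ts, t = Term.fn f ts ∧ Defined R f ∧ ∀ u ∈ ts, ConsTerm R u

/-- Innermost runtime complexity. -/
noncomputable def irc (R : Set (Rule σ V)) (n : ℕ) : ℕ∞ :=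
  sSup { d : ℕ∞ | ∃ t, BasicTerm R t ∧ t.size ≤ n ∧ d = Dh (InnermostRewrite R) t }

/-- Parallel-innermost runtime complexity. -/
noncomputable def pirc (R : Set (Rule σ V)) (n : ℕ) : ℕ∞ :=
  sSup { d : ℕ∞ | ∃ t, BasicTerm R t ∧ t.size ≤ n ∧ d = Dh (ParInnermost R) t }

/-! ## Critical pairs -/

def RuleVars (r : Rule σ V) : Set V :=
  { x | Term.VarIn x r.lhs ∨ Term.VarIn x r.rhs }

/-- `r₂` is a variant of `r₁` (each is a substitution instance of the other). -/
def IsVariantOf (r₁ r₂ : Rule σ V) : Prop :=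
  ∃ θ₁ θ₂ : V → Term σ V,
    r₂.lhs = Term.subst θ₁ r₁.lhs ∧ r₂.rhs = Term.subst θ₁ r₁.rhs ∧
    r₁.lhs = Term.subst θ₂ r₂.lhs ∧ r₁.rhs = Term.subst θ₂ r₂.rhs

def Unifies (θ : V → Term σ V) (s t : Term σ V) : Prop :=
  Term.subst θ s = Term.subst θ t

def IsMGU (μ : V → Term σ V) (s t : Term σ V) : Prop :=
  Unifies μ s t ∧
    ∀ δ : V → Term σ V, Unifies δ s t →
      ∃ δ' : V → Term σ V, ∀ x : V, Term.subst δ' (μ x) = δ x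

/-- Critical pairs `⟨uσ[rσ]π, vσ⟩` of a TRS, from variable-renamed copies
`ℓ → r` and `u → v` of rules of `R` overlapping at a non-variable position
`π` of `u` (not a root overlap of variants of the same rule). -/
def CriticalPair (R : Set (Rule σ V)) (cp : Term σ V × Term σ V) : Prop :=
  ∃ r₁ r₂ r₁' r₂' : Rule σ V, r₁' ∈ R ∧ r₂' ∈ R ∧
    IsVariantOf r₁' r₁ ∧ IsVariantOf r₂' r₂ ∧
    (∀ x : V, x ∈ RuleVars r₁ → x ∉ RuleVars r₂) ∧
    ∃ (π : List ℕ) (u' : Term σ V),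
      r₂.lhs.subtermAt π = some u' ∧ ¬ u'.isVar ∧
      (π = [] → ¬ IsVariantOf r₁ r₂) ∧
      ∃ μ : V → Term σ V, IsMGU μ r₁.lhs u' ∧
        ∃ w : Term σ V,
          (Term.subst μ r₂.lhs).replaceAt π (Term.subst μ r₁.rhs) = some w ∧
          cp = (w, Term.subst μ r₂.rhs)

/-- `R` is non-overlapping iff it has no critical pairs. -/
def NonOverlapping (R : Set (Rule σ V)) : Prop := ∀ cp, ¬ CriticalPair R cp

/-- An innermost critical overlay: a critical pair at the root position whose
critical peak consists of two innermost rewrite steps. -/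
def InnermostCriticalOverlay (R : Set (Rule σ V)) (cp : Term σ V × Term σ V) : Prop :=
  ∃ r₁ r₂ r₁' r₂' : Rule σ V, r₁' ∈ R ∧ r₂' ∈ R ∧
    IsVariantOf r₁' r₁ ∧ IsVariantOf r₂' r₂ ∧
    (∀ x : V, x ∈ RuleVars r₁ → x ∉ RuleVars r₂) ∧
    ¬ IsVariantOf r₁ r₂ ∧
    ∃ μ : V → Term σ V, IsMGU μ r₁.lhs r₂.lhs ∧
      IsInnermostRedex R (Term.subst μ r₂.lhs) ∧
      cp = (Term.subst μ r₁.rhs, Term.subst μ r₂.rhs)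

/-! ## Positions with defined symbols and structural dependency chains -/

/-- Strict prefix order on positions: `PosGT τ π` iff `τ > π`,
i.e. `∃ π' ≠ ε, π π' = τ`. -/
def PosGT (τ π : List ℕ) : Prop := ∃ π' : List ℕ, π' ≠ [] ∧ π ++ π' = τ

/-- `PosD(t)`: positions of `t` with defined root symbol. -/
def PosD (R : Set (Rule σ V)) (t : Term σ V) : Set (List ℕ) :=
  { π | ∃ u, t.subtermAt π = some u ∧ HasDefinedRoot R u }

/-- Structural dependency chain `⟨π₁,…,πₖ⟩` for `t`: positions in `PosD(t)`
with `π₁ > … > πₖ`. -/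
def SDChain (R : Set (Rule σ V)) (t : Term σ V) (c : List (List ℕ)) : Prop :=
  (∀ π ∈ c, π ∈ PosD R t) ∧ c.Chain' PosGT

/-- Maximal structural dependency chains: `MSDC R t c` iff `c` is a maximal
structural dependency chain for `t`. -/
def MSDC (R : Set (Rule σ V)) (t : Term σ V) (c : List (List ℕ)) : Prop :=
  SDChain R t c ∧
    ((c = [] ∧ PosD R t = ∅) ∨
      ∃ (π₁ : List ℕ) (rest : List (List ℕ)), c = π₁ :: rest ∧
        ∀ π ∈ PosD R t, ¬ PosGT π π₁ ∧ (PosGT π₁ π → π ∈ rest))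

/-! ## Sharp terms, dependency tuples -/

/-- Extended signature: base symbols, sharp symbols `f#`, compound symbols `Com_n`. -/
inductive SharpSym (σ : Type) : Type where
  | base : σ → SharpSym σ
  | sharp : σ → SharpSym σ
  | com : ℕ → SharpSym σ

mutual
  def Term.embed : Term σ V → Term (SharpSym σ) V
    | Term.var x => Term.var x
    | Term.fn f ts => Term.fn (SharpSym.base f) (Term.embedList ts)
  def Term.embedList : List (Term σ V) → List (Term (SharpSym σ) V)
    | [] => []
    | t :: ts => Term.embed t :: Term.embedList ts
end

open Classical in
/-- `t#`: mark the root of `t` with its sharp symbol (if defined). -/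
noncomputable def Term.sharp (R : Set (Rule σ V)) : Term σ V → Term (SharpSym σ) V
  | Term.var x => Term.var x
  | Term.fn f ts =>
    if Defined R f then Term.fn (SharpSym.sharp f) (Term.embedList ts)
    else Term.fn (SharpSym.base f) (Term.embedList ts)

open Classical in
/-- Sharping on terms over the extended signature: for `t = f(…)` with `f` a
defined (base) symbol of `R`, mark the root; otherwise `t# = t`. -/
noncomputable def sharpC (R : Set (Rule σ V)) : Term (SharpSym σ) V → Term (SharpSym σ) V
  | Term.fn (SharpSym.base f) ts =>
    if Defined R f then Term.fn (SharpSym.sharp f) ts else Term.fn (SharpSym.base f) ts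
  | t => t

def liftRule (r : Rule σ V) : Rule (SharpSym σ) V :=
  { lhs := r.lhs.embed, rhs := r.rhs.embed }

def liftRules (R : Set (Rule σ V)) : Set (Rule (SharpSym σ) V) := liftRule '' R

/-- The dependency tuple `ℓ# → Com_k(u₁#,…,uₖ#)` built from subterms `u₁,…,uₖ`
of the right-hand side. -/
noncomputable def mkDT (R : Set (Rule σ V)) (ρ : Rule σ V) (us : List (Term σ V)) :
    Rule (SharpSym σ) V :=
  { lhs := Term.sharp R ρ.lhs,
    rhs := Term.fn (SharpSym.com us.length) (us.map (Term.sharp R)) }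

/-- `DTpar(ℓ → r)`: one dependency tuple per maximal structural dependency chain. -/
def DTparRule (R : Set (Rule σ V)) (ρ : Rule σ V) : Set (Rule (SharpSym σ) V) :=
  { d | ∃ (c : List (List ℕ)) (us : List (Term σ V)),
      MSDC R ρ.rhs c ∧
      List.Forall₂ (fun π u => ρ.rhs.subtermAt π = some u) c us ∧
      d = mkDT R ρ us }

/-- `DTpar(R)`. -/
def DTparSet (R : Set (Rule σ V)) : Set (Rule (SharpSym σ) V) :=
  ⋃ ρ ∈ R, DTparRule R ρ

/-! ## Chain trees and Cplx -/

/-- A (possibly infinite, finitely branching) tree whose nodes (addressed by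
paths) are labelled with a dependency tuple and a substitution; the child at
direction `i` corresponds to argument `i` of the `Com` symbol. -/
structure ChainTree (σ V : Type) where
  label : List ℕ → Option (Rule (SharpSym σ) V × (V → Term (SharpSym σ) V))

/-- `T` is a `(D,R)`-chain tree for the sharp term `t`. -/
def IsChainTree (D R : Set (Rule (SharpSym σ) V)) (T : ChainTree σ V)
    (t : Term (SharpSym σ) V) : Prop :=
  (∃ r ν, T.label [] = some (r, ν) ∧ Term.subst ν r.lhs = t) ∧
  (∀ (p : List ℕ) (i : ℕ), T.label (p ++ [i]) ≠ none → T.label p ≠ none) ∧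
  (∀ (p : List ℕ) (r : Rule (SharpSym σ) V) (ν : V → Term (SharpSym σ) V),
    T.label p = some (r, ν) →
      r ∈ D ∧ NormalForm R (Term.subst ν r.lhs) ∧
      ∀ (i : ℕ) (r' : Rule (SharpSym σ) V) (δ : V → Term (SharpSym σ) V),
        T.label (p ++ [i]) = some (r', δ) →
          ∃ (m : ℕ) (vs : List (Term (SharpSym σ) V)),
            r.rhs = Term.fn (SharpSym.com m) vs ∧
            ∃ v, vs[i]? = some v ∧
              Relation.ReflTransGen (InnermostRewrite R)
                (Term.subst ν v) (Term.subst δ r'.lhs))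

/-- `|T|_S`: the number of nodes of `T` labelled with a DT from `S`. -/
noncomputable def treeCount (T : ChainTree σ V) (S : Set (Rule (SharpSym σ) V)) : ℕ∞ :=
  Set.encard { p : List ℕ | ∃ r ν, T.label p = some (r, ν) ∧ r ∈ S }

/-- `Cplx⟨D,S,R⟩(t)`: the supremum of `|T|_S` over all `(D,R)`-chain trees `T`
for `t` (`0` if there is no chain tree). -/
noncomputable def Cplx (D S R : Set (Rule (SharpSym σ) V))
    (t : Term (SharpSym σ) V) : ℕ∞ :=
  sSup { c : ℕ∞ | ∃ T : ChainTree σ V, IsChainTree D R T t ∧ c = treeCount T S }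

/-- `irc⟨D,S,R⟩(n)`: runtime complexity of a DT problem. -/
noncomputable def ircDTP (D S : Set (Rule (SharpSym σ) V)) (R : Set (Rule σ V))
    (n : ℕ) : ℕ∞ :=
  sSup { c : ℕ∞ | ∃ t : Term σ V, BasicTerm R t ∧ t.size ≤ n ∧
    c = Cplx D S (liftRules R) (Term.sharp R t) }

/-! ## Relative rewriting -/

/-- An innermost rewrite step using a rule from `X`, with innermost-ness
relative to the whole system `W`. -/
def InnermostRewriteSub (W X : Set (Rule σ V)) (s t : Term σ V) : Prop :=
  ∃ π, ∃ r ∈ X, ∃ θ : V → Term σ V,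
    s.subtermAt π = some (Term.subst θ r.lhs) ∧
    IsInnermostRedex W (Term.subst θ r.lhs) ∧
    s.replaceAt π (Term.subst θ r.rhs) = some t

/-- Innermost relative rewriting `→i_{A/B}`:
`s →B* s' →A s'' →B* t`, all steps innermost wrt `A ∪ B`. -/
def RelInnermost (A B : Set (Rule σ V)) (s t : Term σ V) : Prop :=
  ∃ s' s'' : Term σ V,
    Relation.ReflTransGen (InnermostRewriteSub (A ∪ B) B) s s' ∧
    InnermostRewriteSub (A ∪ B) A s' s'' ∧
    Relation.ReflTransGen (InnermostRewriteSub (A ∪ B) B) s'' t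

/-- Innermost runtime complexity of a relative TRS `A/B`. -/
noncomputable def ircRel (A B : Set (Rule σ V)) (n : ℕ) : ℕ∞ :=
  sSup { d : ℕ∞ | ∃ t : Term σ V, BasicTerm (A ∪ B) t ∧ t.size ≤ n ∧
    d = Dh (RelInnermost A B) t }

/-! ## Dependency tuples (abstract DT problems) -/

inductive IsBaseTerm : Term (SharpSym σ) V → Prop
  | var (x : V) : IsBaseTerm (Term.var x)
  | fn (f : σ) (ts : List (Term (SharpSym σ) V)) :
      (∀ t ∈ ts, IsBaseTerm t) → IsBaseTerm (Term.fn (SharpSym.base f) ts)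

def IsSharpTerm (t : Term (SharpSym σ) V) : Prop :=
  ∃ (f : σ) (args : List (Term (SharpSym σ) V)),
    t = Term.fn (SharpSym.sharp f) args ∧ ∀ a ∈ args, IsBaseTerm a

/-- A dependency tuple: a rule `s# → Com_n(t₁#,…,tₙ#)`. -/
def IsDT (r : Rule (SharpSym σ) V) : Prop :=
  IsSharpTerm r.lhs ∧
    ∃ (n : ℕ) (ts : List (Term (SharpSym σ) V)),
      r.rhs = Term.fn (SharpSym.com n) ts ∧ ts.length = n ∧ ∀ t ∈ ts, IsSharpTerm t

/-! ## Argument normal forms -/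

/-- Argument normal form: a variable, or a term all of whose direct arguments
are normal forms. -/
def ArgNF (R : Set (Rule σ V)) (t : Term σ V) : Prop :=
  (∃ x, t = Term.var x) ∨ ∃ f ts, t = Term.fn f ts ∧ ∀ u ∈ ts, NormalForm R u

/-- A parallel-innermost step all of whose rewrites are at positions strictly
below the root. -/
def ParInnermostBelow (R : Set (Rule σ V)) (s t : Term σ V) : Prop :=
  ParInnermost R s t ∧ ¬ IsInnermostRedex R s

/-- `b` is a maximal parallel argument normal form of `u`. -/
noncomputable def MaxANF (R : Set (Rule σ V)) (u b : Term σ V) : Prop :=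
  ArgNF R b ∧ Relation.ReflTransGen (ParInnermostBelow R) u b ∧
    ∀ u', ArgNF R u' → Relation.ReflTransGen (ParInnermostBelow R) u u' →
      Dh (ParInnermost R) u' ≤ Dh (ParInnermost R) b

/-! ## Many-sorted type assignments -/

/-- Well-typedness of a term wrt a sort set `St`, a type assignment `arty`
(argument sorts and result sort for each symbol) and variable typing `vty`. -/
inductive WellTyped {τ : Type} (St : Type) (arty : τ → List St × St) (vty : V → St) :
    Term τ V → St → Prop
  | var (x : V) : WellTyped St arty vty (Term.var x) (vty x)
  | fn (f : τ) (ts : List (Term τ V)) :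
      ts.length = (arty f).1.length →
      (∀ p ∈ ts.zip (arty f).1, WellTyped St arty vty p.1 p.2) →
      WellTyped St arty vty (Term.fn f ts) (arty f).2

/-- A strict total order on positions extending the strict prefix order. -/
def TotalExtOfPrefix (gt' : List ℕ → List ℕ → Prop) : Prop :=
  (∀ π τ, PosGT π τ → gt' π τ) ∧
  (∀ π τ ρ, gt' π τ → gt' τ ρ → gt' π ρ) ∧
  (∀ π τ, gt' π τ → ¬ gt' τ π) ∧
  (∀ π τ, π ≠ τ → gt' π τ ∨ gt' τ π)



lemma aux_mem_of_getElem? {α : Type} {l : List α} {i : ℕ} {a : α}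
    (h : l[i]? = some a) : a ∈ l := by
  obtain ⟨h1, rfl⟩ := List.getElem?_eq_some_iff.mp h
  exact List.getElem_mem _

lemma aux_substList_eq_map (θ : V → Term σ V) (ts : List (Term σ V)) :
    Term.substList θ ts = ts.map (Term.subst θ) := by
  induction ts with
  | nil => simp [Term.substList]
  | cons a l ih => simp [Term.substList, ih]

lemma aux_subtermAt_append (t : Term σ V) (p q : List ℕ) :
    t.subtermAt (p ++ q) = (t.subtermAt p).bind (fun u => u.subtermAt q) := by
  induction p generalizing t with
  | nil => simp [Term.subtermAt]
  | cons i p ih =>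
    cases t with
    | var x => simp [Term.subtermAt]
    | fn f ts =>
      simp only [List.cons_append, Term.subtermAt]
      cases h : ts[i]? with
      | none => simp
      | some u => exact ih u

lemma aux_size_pos (t : Term σ V) : 1 ≤ t.size := by
  cases t <;> simp [Term.size]

lemma aux_size_le_sizeList {ts : List (Term σ V)} {i : ℕ} {v : Term σ V}
    (h : ts[i]? = some v) : v.size ≤ Term.sizeList ts := by
  induction ts generalizing i with
  | nil => simp at h
  | cons a l ih =>
    cases i with
    | zero =>
      simp only [List.getElem?_cons_zero, Option.some.injEq] at h
      subst h; simp [Term.sizeList]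
    | succ i =>
      simp only [List.getElem?_cons_succ] at h
      have := ih h
      simp only [Term.sizeList]; omega

lemma aux_size_le_of_subtermAt {t u : Term σ V} {p : List ℕ}
    (h : t.subtermAt p = some u) : u.size ≤ t.size := by
  induction p generalizing t with
  | nil => simp [Term.subtermAt] at h; subst h; exact le_rfl
  | cons i q ih =>
    cases t with
    | var x => simp [Term.subtermAt] at h
    | fn f ts =>
      simp only [Term.subtermAt] at h
      cases h' : ts[i]? with
      | none => rw [h'] at h; simp at h
      | some v =>
        rw [h'] at h
        have h1 := ih h
        have h2 := aux_size_le_sizeList h'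
        simp only [Term.size]; omega

lemma aux_size_lt_of_subtermAt {t u : Term σ V} {p : List ℕ}
    (h : t.subtermAt p = some u) (hp : p ≠ []) : u.size < t.size := by
  cases p with
  | nil => exact absurd rfl hp
  | cons i q =>
    cases t with
    | var x => simp [Term.subtermAt] at h
    | fn f ts =>
      simp only [Term.subtermAt] at h
      cases h' : ts[i]? with
      | none => rw [h'] at h; simp at h
      | some v =>
        rw [h'] at h
        have h1 := aux_size_le_of_subtermAt h
        have h2 := aux_size_le_sizeList h'
        simp only [Term.size]; omega

lemma aux_subst_subtermAt {θ : V → Term σ V} {r u : Term σ V} {p : List ℕ}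
    (h : r.subtermAt p = some u) :
    (Term.subst θ r).subtermAt p = some (Term.subst θ u) := by
  induction p generalizing r with
  | nil => simp [Term.subtermAt] at h ⊢; subst h; rfl
  | cons i q ih =>
    cases r with
    | var x => simp [Term.subtermAt] at h
    | fn f ts =>
      simp only [Term.subtermAt] at h
      cases h' : ts[i]? with
      | none => rw [h'] at h; simp at h
      | some v =>
        rw [h'] at h
        simp only [Term.subst, Term.subtermAt, aux_substList_eq_map,
          List.getElem?_map, h', Option.map_some]
        exact ih h

lemma aux_subst_decomp {θ : V → Term σ V} {r w : Term σ V} {p : List ℕ}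
    (h : (Term.subst θ r).subtermAt p = some w) :
    (∃ u, r.subtermAt p = some u ∧ ¬ u.isVar ∧ w = Term.subst θ u) ∨
    (∃ p₁ p₂ x, p = p₁ ++ p₂ ∧ r.subtermAt p₁ = some (Term.var x) ∧
      (θ x).subtermAt p₂ = some w) := by
  induction p generalizing r with
  | nil =>
    simp only [Term.subtermAt, Option.some.injEq] at h
    cases r with
    | var x =>
      right; exact ⟨[], [], x, rfl, rfl, by simp [Term.subtermAt, Term.subst] at h ⊢; exact h⟩
    | fn f ts =>
      left; exact ⟨Term.fn f ts, rfl, by simp [Term.isVar], h.symm⟩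
  | cons i q ih =>
    cases r with
    | var x =>
      right; exact ⟨[], i :: q, x, rfl, rfl, h⟩
    | fn f ts =>
      simp only [Term.subst, Term.subtermAt, aux_substList_eq_map, List.getElem?_map] at h
      cases h' : ts[i]? with
      | none => rw [h'] at h; simp at h
      | some v =>
        rw [h'] at h; simp only [Option.map_some] at h
        rcases ih h with ⟨u, hu1, hu2, hu3⟩ | ⟨p₁, p₂, x, hp, h1, h2⟩
        · left
          refine ⟨u, ?_, hu2, hu3⟩
          simp only [Term.subtermAt, h']; exact hu1
        · right
          refine ⟨i :: p₁, p₂, x, by rw [hp]; rfl, ?_, h2⟩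
          simp only [Term.subtermAt, h']; exact h1

lemma aux_varIn_of_subtermAt {t : Term σ V} {p : List ℕ} {x : V}
    (h : t.subtermAt p = some (Term.var x)) : Term.VarIn x t := by
  induction p generalizing t with
  | nil =>
    simp only [Term.subtermAt, Option.some.injEq] at h
    subst h; exact Term.VarIn.var
  | cons i q ih =>
    cases t with
    | var y => simp [Term.subtermAt] at h
    | fn f ts =>
      simp only [Term.subtermAt] at h
      cases h' : ts[i]? with
      | none => rw [h'] at h; simp at h
      | some v =>
        rw [h'] at h
        exact Term.VarIn.fn (aux_mem_of_getElem? h') (ih h)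

lemma aux_exists_pos_of_varIn {t : Term σ V} {x : V} (h : Term.VarIn x t) :
    ∃ p, t.subtermAt p = some (Term.var x) := by
  induction h with
  | var => exact ⟨[], rfl⟩
  | fn hmem _ ih =>
    obtain ⟨p, hp⟩ := ih
    obtain ⟨i, hi⟩ := List.mem_iff_getElem?.mp hmem
    exact ⟨i :: p, by simp only [Term.subtermAt, hi]; exact hp⟩

lemma aux_redex_shape {R : Set (Rule σ V)} (hnv : ∀ r ∈ R, ¬ r.lhs.isVar)
    {u : Term σ V} (h : IsRedex R u) :
    ∃ f args, u = Term.fn f args ∧ Defined R f := by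
  obtain ⟨r, hr, θ, rfl⟩ := h
  cases hl : r.lhs with
  | var x => exact absurd ⟨x, hl⟩ (hnv r hr)
  | fn f ts =>
    exact ⟨f, Term.substList θ ts, rfl, ⟨r, hr, ts, hl⟩⟩

lemma aux_subtermAt_replaceAt {t t' s : Term σ V} {p : List ℕ}
    (h : t.replaceAt p s = some t') : t'.subtermAt p = some s := by
  induction p generalizing t t' with
  | nil =>
    simp only [Term.replaceAt, Option.some.injEq] at h
    subst h; cases s <;> rfl
  | cons i q ih =>
    cases t with
    | var x => simp [Term.replaceAt] at h
    | fn f ts =>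
      simp only [Term.replaceAt] at h
      cases h1 : ts[i]? with
      | none => rw [h1] at h; simp at h
      | some u =>
        rw [h1] at h
        have h' : (match u.replaceAt q s with
          | none => none
          | some u' => some (Term.fn f (ts.set i u'))) = some t' := h
        cases h2 : u.replaceAt q s with
        | none => rw [h2] at h'; simp at h'
        | some u' =>
          rw [h2] at h'; simp only [Option.some.injEq] at h'
          subst h'
          have hi : i < ts.length := (List.getElem?_eq_some_iff.mp h1).1
          simp only [Term.subtermAt, List.getElem?_set_self hi]
          exact ih h2

lemma aux_subtermAt_replaceAt_incomp {t t' s : Term σ V} {p ρ : List ℕ}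
    (hpρ : ¬ p <+: ρ) (hρp : ¬ ρ <+: p) (h : t.replaceAt p s = some t') :
    t'.subtermAt ρ = t.subtermAt ρ := by
  induction p generalizing t t' ρ with
  | nil => exact absurd (List.nil_prefix) hpρ
  | cons i q ih =>
    cases ρ with
    | nil => exact absurd (List.nil_prefix) hρp
    | cons j τ =>
      cases t with
      | var x => simp [Term.replaceAt] at h
      | fn f ts =>
        simp only [Term.replaceAt] at h
        cases h1 : ts[i]? with
        | none => rw [h1] at h; simp at h
        | some u =>
          rw [h1] at h
          have h' : (match u.replaceAt q s with
            | none => none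
            | some u' => some (Term.fn f (ts.set i u'))) = some t' := h
          cases h2 : u.replaceAt q s with
          | none => rw [h2] at h'; simp at h'
          | some u' =>
            rw [h2] at h'; simp only [Option.some.injEq] at h'
            subst h'
            by_cases hij : i = j
            · subst hij
              have hq : ¬ q <+: τ := fun hx => hpρ (List.cons_prefix_cons.mpr ⟨rfl, hx⟩)
              have hτ : ¬ τ <+: q := fun hx => hρp (List.cons_prefix_cons.mpr ⟨rfl, hx⟩)
              have hi : i < ts.length := (List.getElem?_eq_some_iff.mp h1).1
              simp only [Term.subtermAt, List.getElem?_set_self hi, h1]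
              exact ih hq hτ h2
            · simp only [Term.subtermAt, List.getElem?_set_ne hij]


lemma aux_subtermAt_nil (t : Term σ V) : t.subtermAt [] = some t := by
  cases t <;> rfl

lemma aux_posGT_trans : Transitive (PosGT) := by
  rintro a b c ⟨s, hs, rfl⟩ ⟨s', hs', rfl⟩
  exact ⟨s' ++ s, by simp [hs'], (List.append_assoc _ _ _).symm⟩

instance : IsTrans (List ℕ) PosGT := ⟨fun _ _ _ h1 h2 => aux_posGT_trans h1 h2⟩

lemma aux_exists_maximal (R : Set (Rule σ V)) (t : Term σ V) :
    ∀ τ ∈ PosD R t, ∃ π ∈ PosD R t, τ <+: π ∧ ∀ ρ ∈ PosD R t, ¬ PosGT ρ π := by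
  suffices h : ∀ k τ u, t.subtermAt τ = some u → HasDefinedRoot R u → u.size ≤ k →
      ∃ π ∈ PosD R t, τ <+: π ∧ ∀ ρ ∈ PosD R t, ¬ PosGT ρ π by
    rintro τ ⟨u, hu, hd⟩
    exact h u.size τ u hu hd le_rfl
  intro k
  induction k with
  | zero =>
    intro τ u _ _ hk
    have := aux_size_pos u; omega
  | succ k ih =>
    intro τ u hu hd hk
    by_cases hex : ∃ ρ ∈ PosD R t, PosGT ρ τ
    · obtain ⟨ρ, hρ, s, hs, rfl⟩ := hex
      obtain ⟨w, hw, hwd⟩ := hρ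
      have hws : u.subtermAt s = some w := by
        rw [aux_subtermAt_append, hu] at hw
        exact hw
      have hsz : w.size ≤ k := by
        have := aux_size_lt_of_subtermAt hws hs; omega
      obtain ⟨π, hπ, hpre, hmax⟩ := ih (τ ++ s) w hw hwd hsz
      exact ⟨π, hπ, (List.prefix_append τ s).trans hpre, hmax⟩
    · exact ⟨τ, ⟨u, hu, hd⟩, List.prefix_refl _, fun ρ hρ hgt => hex ⟨ρ, hρ, hgt⟩⟩

open Classical in
lemma aux_msdc_of_maximal (R : Set (Rule σ V)) (t : Term σ V) (π₁ : List ℕ)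
    (h1 : π₁ ∈ PosD R t) (hmax : ∀ ρ ∈ PosD R t, ¬ PosGT ρ π₁) :
    MSDC R t (π₁ :: (((List.range π₁.length).reverse.map (π₁.take ·)).filter
      (fun p => decide (p ∈ PosD R t)))) := by
  set rest := ((List.range π₁.length).reverse.map (π₁.take ·)).filter
      (fun p => decide (p ∈ PosD R t)) with hrest
  have hrest_mem : ∀ b ∈ rest, b ∈ PosD R t ∧ ∃ k, k < π₁.length ∧ b = π₁.take k := by
    intro b hb
    have h := List.mem_filter.mp hb
    obtain ⟨k, hk, rfl⟩ := List.mem_map.mp h.1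
    exact ⟨of_decide_eq_true h.2, k, List.mem_range.mp (List.mem_reverse.mp hk), rfl⟩
  have hgt_take : ∀ k, k < π₁.length → PosGT π₁ (π₁.take k) := by
    intro k hk
    refine ⟨π₁.drop k, ?_, List.take_append_drop k π₁⟩
    simp only [ne_eq, List.drop_eq_nil_iff]; omega
  constructor
  · constructor
    · intro π hπ
      rcases List.mem_cons.mp hπ with rfl | hπ
      · exact h1
      · exact (hrest_mem π hπ).1
    · rw [show List.Chain' PosGT (π₁ :: rest) = List.IsChain PosGT (π₁ :: rest) from rfl,
        List.isChain_iff_pairwise]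
      refine List.pairwise_cons.mpr ⟨?_, ?_⟩
      · intro b hb
        obtain ⟨-, k, hk, rfl⟩ := hrest_mem b hb
        exact hgt_take k hk
      · apply List.Pairwise.filter
        rw [List.pairwise_map, List.pairwise_reverse]
        refine (List.pairwise_lt_range (n := π₁.length)).imp_of_mem ?_
        intro a b ha hb hab
        have hb' : b < π₁.length := List.mem_range.mp hb
        refine ⟨(π₁.drop a).take (b - a), ?_, ?_⟩
        · apply List.ne_nil_of_length_pos
          simp only [List.length_take, List.length_drop]
          omega
        · rw [← List.take_add]
          congr 1
          omega
  · right
    refine ⟨π₁, rest, rfl, ?_⟩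
    intro π hπ
    refine ⟨hmax π hπ, ?_⟩
    rintro ⟨s, hs, heq⟩
    have hlen : π.length < π₁.length := by
      rw [← heq, List.length_append]
      have := List.length_pos_iff.mpr hs
      omega
    have htake : π₁.take π.length = π := by rw [← heq, List.take_left]
    rw [hrest]
    refine List.mem_filter.mpr ⟨?_, decide_eq_true hπ⟩
    exact List.mem_map.mpr ⟨π.length, List.mem_reverse.mpr (List.mem_range.mpr hlen), htake⟩

lemma aux_posD_chain {R : Set (Rule σ V)} {r : Term σ V}
    (h : ∃! c, MSDC R r c) :
    ∀ τ₁ ∈ PosD R r, ∀ τ₂ ∈ PosD R r, τ₁ <+: τ₂ ∨ τ₂ <+: τ₁ := by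
  intro τ₁ h₁ τ₂ h₂
  obtain ⟨π₁, hπ₁, hpre₁, hmax₁⟩ := aux_exists_maximal R r τ₁ h₁
  obtain ⟨π₂, hπ₂, hpre₂, hmax₂⟩ := aux_exists_maximal R r τ₂ h₂
  have m1 := aux_msdc_of_maximal R r π₁ hπ₁ hmax₁
  have m2 := aux_msdc_of_maximal R r π₂ hπ₂ hmax₂
  obtain ⟨c, -, huniq⟩ := h
  have heq := (huniq _ m1).trans (huniq _ m2).symm
  have hππ : π₁ = π₂ := by injection heq
  exact List.prefix_or_prefix_of_prefix hpre₁ (hππ ▸ hpre₂)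

lemma aux_consTerm_not_defined {R : Set (Rule σ V)} {p : List ℕ} :
    ∀ {c : Term σ V}, ConsTerm R c → ∀ {f : σ} {args : List (Term σ V)},
      c.subtermAt p = some (Term.fn f args) → ¬ Defined R f := by
  induction p with
  | nil =>
    intro c hc f args h
    rw [aux_subtermAt_nil] at h
    injection h with h
    subst h
    cases hc with
    | fn f ts hdef _ => exact hdef
  | cons i q ih =>
    intro c hc f args h
    cases c with
    | var x => simp [Term.subtermAt] at h
    | fn g ts =>
      simp only [Term.subtermAt] at h
      cases h1 : ts[i]? with
      | none => rw [h1] at h; simp at h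
      | some v =>
        rw [h1] at h
        cases hc with
        | fn _ _ _ hts => exact ih (hts v (aux_mem_of_getElem? h1)) h

def RedexAt (R : Set (Rule σ V)) (t : Term σ V) (p : List ℕ) : Prop :=
  ∃ u, t.subtermAt p = some u ∧ IsRedex R u

def ChainInv (R : Set (Rule σ V)) (t : Term σ V) : Prop :=
  ∀ p q, RedexAt R t p → RedexAt R t q → p <+: q ∨ q <+: p

lemma aux_basic_chainInv {R : Set (Rule σ V)} (hnv : ∀ r ∈ R, ¬ r.lhs.isVar)
    {t0 : Term σ V} (hb : BasicTerm R t0) : ChainInv R t0 := by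
  obtain ⟨f, ts, rfl, hdef, hcons⟩ := hb
  have hnil : ∀ p, RedexAt R (Term.fn f ts) p → p = [] := by
    rintro p ⟨u, hu, hred⟩
    cases p with
    | nil => rfl
    | cons i q =>
      exfalso
      simp only [Term.subtermAt] at hu
      cases h1 : ts[i]? with
      | none => rw [h1] at hu; simp at hu
      | some v =>
        rw [h1] at hu
        obtain ⟨g, args, rfl, hg⟩ := aux_redex_shape hnv hred
        exact aux_consTerm_not_defined (hcons v (aux_mem_of_getElem? h1)) hu hg
  intro p q hp hq
  rw [hnil p hp, hnil q hq]
  left; exact List.prefix_refl _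

lemma aux_step_preserves {R : Set (Rule σ V)} (hR : IsWfTRS R)
    (hch : ∀ ρ ∈ R, ∀ τ₁ ∈ PosD R ρ.rhs, ∀ τ₂ ∈ PosD R ρ.rhs, τ₁ <+: τ₂ ∨ τ₂ <+: τ₁)
    {t t' : Term σ V} (hinv : ChainInv R t) (hstep : InnermostRewrite R t t') :
    ChainInv R t' := by
  obtain ⟨π, r, hrR, θ, hsub, hinn, hrep⟩ := hstep
  have hnv := hR.2.1
  have ht'π : t'.subtermAt π = some (Term.subst θ r.rhs) := aux_subtermAt_replaceAt hrep
  have hclass : ∀ p, RedexAt R t' p → p <+: π ∨ ∃ τ, τ ∈ PosD R r.rhs ∧ p = π ++ τ := by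
    rintro p ⟨u, hu, hred⟩
    by_cases hpπ : p <+: π
    · left; exact hpπ
    by_cases hπp : π <+: p
    · right
      obtain ⟨τ, rfl⟩ := hπp
      have hτ : (Term.subst θ r.rhs).subtermAt τ = some u := by
        rw [aux_subtermAt_append, ht'π] at hu
        exact hu
      rcases aux_subst_decomp hτ with ⟨v, hv1, hv2, hv3⟩ | ⟨p₁, p₂, x, hps, h1, h2⟩
      · refine ⟨τ, ⟨v, hv1, ?_⟩, rfl⟩
        obtain ⟨g, args, hu', hg⟩ := aux_redex_shape hnv hred
        cases v with
        | var y => exact absurd ⟨y, rfl⟩ hv2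
        | fn g' vs =>
          refine ⟨g', vs, rfl, ?_⟩
          rw [hu'] at hv3
          have hv3' : Term.fn g args = Term.fn g' (Term.substList θ vs) := hv3
          injection hv3' with hgg _
          exact hgg ▸ hg
      · exfalso
        have hvlhs := hR.2.2 r hrR x (aux_varIn_of_subtermAt h1)
        obtain ⟨p₀, hp₀⟩ := aux_exists_pos_of_varIn hvlhs
        have hp₀ne : p₀ ≠ [] := by
          intro hn; subst hn
          rw [aux_subtermAt_nil] at hp₀
          injection hp₀ with hp₀
          exact hnv r hrR ⟨x, hp₀⟩
        have hθx : (Term.subst θ r.lhs).subtermAt p₀ = some (θ x) := by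
          have h3 := aux_subst_subtermAt (θ := θ) hp₀
          simpa [Term.subst] using h3
        have hw : (Term.subst θ r.lhs).subtermAt (p₀ ++ p₂) = some u := by
          rw [aux_subtermAt_append, hθx]
          exact h2
        exact hinn.2 (p₀ ++ p₂) (fun hc => hp₀ne (List.append_eq_nil_iff.mp hc).1) u hw hred
    · exfalso
      have heq := aux_subtermAt_replaceAt_incomp hπp hpπ hrep
      have hpt : RedexAt R t p := ⟨u, heq ▸ hu, hred⟩
      have hπt : RedexAt R t π := ⟨Term.subst θ r.lhs, hsub, ⟨r, hrR, θ, rfl⟩⟩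
      rcases hinv p π hpt hπt with h | h
      · exact hpπ h
      · exact hπp h
  intro p q hp hq
  rcases hclass p hp with h1 | ⟨τ₁, hτ₁, rfl⟩ <;> rcases hclass q hq with h2 | ⟨τ₂, hτ₂, rfl⟩
  · exact List.prefix_or_prefix_of_prefix h1 h2
  · left; exact h1.trans (List.prefix_append π τ₂)
  · right; exact h2.trans (List.prefix_append π τ₁)
  · rcases hch r hrR τ₁ hτ₁ τ₂ hτ₂ with h | h
    · obtain ⟨w, rfl⟩ := h
      left; exact ⟨w, by rw [List.append_assoc]⟩
    · obtain ⟨w, rfl⟩ := h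
      right; exact ⟨w, by rw [List.append_assoc]⟩

lemma aux_chainInv_unique {R : Set (Rule σ V)} {t : Term σ V} (hinv : ChainInv R t)
    {π₁ π₂ : List ℕ} {u₁ u₂ : Term σ V}
    (h1 : t.subtermAt π₁ = some u₁) (hi1 : IsInnermostRedex R u₁)
    (h2 : t.subtermAt π₂ = some u₂) (hi2 : IsInnermostRedex R u₂) : π₁ = π₂ := by
  have key : ∀ (a b : List ℕ) (v w : Term σ V), t.subtermAt a = some v →
      IsInnermostRedex R v → t.subtermAt b = some w → IsInnermostRedex R w →
      a <+: b → a = b := by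
    rintro a b v w ha hia hb hib ⟨s, rfl⟩
    cases s with
    | nil => simp
    | cons x xs =>
      exfalso
      rw [aux_subtermAt_append, ha] at hb
      exact hia.2 (x :: xs) (by simp) w hb hib.1
  rcases hinv π₁ π₂ ⟨u₁, h1, hi1.1⟩ ⟨u₂, h2, hi2.1⟩ with h | h
  · exact key _ _ _ _ h1 hi1 h2 hi2 h
  · exact (key _ _ _ _ h2 hi2 h1 hi1 h).symm

lemma aux_parInnermost_transGen {R : Set (Rule σ V)} {s t : Term σ V}
    (h : ParInnermost R s t) : Relation.TransGen (InnermostRewrite R) s t := by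
  cases h with
  | redex h _ _ => exact h
  | congr f ss ts h _ _ => exact h

lemma aux_transGen_preserves {R : Set (Rule σ V)} (hR : IsWfTRS R)
    (hch : ∀ ρ ∈ R, ∀ τ₁ ∈ PosD R ρ.rhs, ∀ τ₂ ∈ PosD R ρ.rhs, τ₁ <+: τ₂ ∨ τ₂ <+: τ₁)
    {a b : Term σ V} (h : Relation.TransGen (InnermostRewrite R) a b)
    (hinv : ChainInv R a) : ChainInv R b := by
  induction h with
  | single h => exact aux_step_preserves hR hch hinv h
  | tail _ h ih => exact aux_step_preserves hR hch ih h

/-- If `|MSDC(r)| = 1` for every rule of `R`, then in every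
parallel-innermost rewrite sequence starting from a basic term, every term of
the sequence contains at most one innermost redex. -/
theorem at_most_one_innermost_redex_of_unique_msdc
    {σ V : Type} [Finite σ] (R : Set (Rule σ V)) (hR : IsWfTRS R)
    (hOne : ∀ ρ ∈ R, ∃! c : List (List ℕ), MSDC R ρ.rhs c)
    (t : ℕ → Term σ V) (N : ℕ) (hbasic : BasicTerm R (t 0))
    (hsteps : ∀ i < N, ParInnermost R (t i) (t (i + 1))) :
    ∀ i ≤ N, ∀ (π₁ π₂ : List ℕ) (u₁ u₂ : Term σ V),
      (t i).subtermAt π₁ = some u₁ → IsInnermostRedex R u₁ →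
      (t i).subtermAt π₂ = some u₂ → IsInnermostRedex R u₂ → π₁ = π₂ := by
  have hch : ∀ ρ ∈ R, ∀ τ₁ ∈ PosD R ρ.rhs, ∀ τ₂ ∈ PosD R ρ.rhs, τ₁ <+: τ₂ ∨ τ₂ <+: τ₁ :=
    fun ρ hρ => aux_posD_chain (hOne ρ hρ)
  have hinv : ∀ i ≤ N, ChainInv R (t i) := by
    intro i
    induction i with
    | zero => exact fun _ => aux_basic_chainInv hR.2.1 hbasic
    | succ n ih =>
      intro hle
      exact aux_transGen_preserves hR hch
        (aux_parInnermost_transGen (hsteps n (by omega))) (ih (by omega))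
  intro i hi π₁ π₂ u₁ u₂ h1 hi1 h2 hi2
  exact aux_chainInv_unique (hinv i hi) h1 hi1 h2 hi2

end ParallelComplexity
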